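/- Let n = 2^k·m with m odd. Then the n-th letter (indexed from 1) of the fixed point ξ_Mu of the substitution a→aca, c→d, d→c is a if k=0, c if k is odd, and d if k is even and positive. -/

import Mathlib

/-- The alphabet `{a, c, d}`. -/
inductive ACD : Type
  | a | c | d
deriving DecidableEq

/-- The substitution `a → aca`, `c → d`, `d → c`. -/
def sMu : ACD → List ACD
  | ACD.a => [ACD.a, ACD.c, ACD.a]
  | ACD.c => [ACD.d]
  | ACD.d => [ACD.c]

/-- The substitution `sMu` extended to words by concatenation. -/
def sMuW (w : List ACD) : List ACD := (w.map sMu).flatten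

lemma sMuW_append (u v : List ACD) : sMuW (u ++ v) = sMuW u ++ sMuW v := by
  simp [sMuW]

lemma iter_append (K : ℕ) (u v : List ACD) :
    sMuW^[K] (u ++ v) = sMuW^[K] u ++ sMuW^[K] v := by
  induction K generalizing u v with
  | zero => rfl
  | succ K ih => simp [Function.iterate_succ_apply, sMuW_append, ih]

lemma iter_c (K : ℕ) :
    sMuW^[K] [ACD.c] = [if Even K then ACD.c else ACD.d] := by
  induction K with
  | zero => simp
  | succ K ih =>
    rw [Function.iterate_succ_apply', ih]
    rcases Nat.even_or_odd K with h | h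
    · simp [h, Nat.even_add_one, sMuW, sMu]
    · simp [Nat.not_even_iff_odd.mpr h, Nat.even_add_one, sMuW, sMu]

lemma iter_a (K : ℕ) :
    sMuW^[K+1] [ACD.a] =
      sMuW^[K] [ACD.a] ++ (sMuW^[K] [ACD.c] ++ sMuW^[K] [ACD.a]) := by
  rw [Function.iterate_succ_apply]
  have : sMuW [ACD.a] = [ACD.a] ++ ([ACD.c] ++ [ACD.a]) := by simp [sMuW, sMu]
  rw [this, iter_append, iter_append]

lemma len_a (K : ℕ) : (sMuW^[K] [ACD.a]).length + 1 = 2^(K+1) := by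
  induction K with
  | zero => simp
  | succ K ih =>
    rw [iter_a]
    simp only [List.length_append, iter_c, List.length_singleton]
    rw [pow_succ]
    omega

lemma key : ∀ K k m : ℕ, Odd m → 2^k * m < 2^(K+1) →
    (sMuW^[K] [ACD.a]).getD (2^k*m - 1) ACD.a =
      (if k = 0 then ACD.a else if Odd k then ACD.c else ACD.d) := by
  intro K
  induction K with
  | zero =>
    intro k m hm hlt
    have hm1 : 1 ≤ m := hm.pos
    have hk1 : 1 ≤ 2^k := Nat.one_le_two_pow
    have hle : 2^k ≤ 2^k * m := Nat.le_mul_of_pos_right _ (by omega)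
    have heq : 2^k * m = 1 := by omega
    have hk0 : k = 0 := by
      by_contra h
      have : 2 ≤ 2^k := by
        calc 2 = 2^1 := by norm_num
        _ ≤ 2^k := Nat.pow_le_pow_right (by norm_num) (by omega)
      omega
    simp [hk0, heq]
  | succ K ih =>
    intro k m hm hlt
    have hm1 : 1 ≤ m := hm.pos
    have hk1 : 1 ≤ 2^k := Nat.one_le_two_pow
    have hn1 : 1 ≤ 2^k * m := Nat.one_le_iff_ne_zero.mpr (by positivity)
    have hlen := len_a K
    have hlenc : (sMuW^[K] [ACD.c]).length = 1 := by rw [iter_c]; rfl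
    rw [iter_a]
    rcases lt_trichotomy (2^k*m) (2^(K+1)) with h | h | h
    · rw [List.getD_append _ _ _ _ (by omega)]
      exact ih k m hm h
    · -- n = 2^(K+1), so m = 1, k = K+1
      have hmd : m ∣ 2^(K+1) := ⟨2^k, by rw [← h]; ring⟩
      have hcop : Nat.Coprime m 2 := hm.coprime_two_right
      have hm' : m = 1 := Nat.Coprime.eq_one_of_dvd (hcop.pow_right _) hmd
      have hk : k = K + 1 := by
        apply Nat.pow_right_injective (le_refl 2)
        rw [hm', mul_one] at h; exact h
      rw [List.getD_append_right _ _ _ _ (by omega),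
        List.getD_append _ _ _ _ (by omega)]
      have hidx : 2^k*m - 1 - (sMuW^[K] [ACD.a]).length = 0 := by omega
      rw [hidx, iter_c]
      rcases Nat.even_or_odd K with he | ho
      · have : Odd (K+1) := Even.add_one he
        simp [hk, he, this]
      · have h1 : ¬ Even K := Nat.not_even_iff_odd.mpr ho
        have h2 : ¬ Odd (K+1) := by simp [Nat.even_add_one, h1]
        simp [hk, h1, h2]
    · -- n > 2^(K+1)
      have hkK : k ≤ K := by
        by_contra hc
        push_neg at hc
        have hd : 2^(K+1) ∣ 2^k * m :=
          dvd_mul_of_dvd_left (pow_dvd_pow 2 hc) _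
        obtain ⟨t, ht⟩ := hd
        have hpow : 2^(K+1+1) = 2 * 2^(K+1) := by rw [pow_succ]; ring
        have ht2 : 2 ≤ t := by
          rcases Nat.lt_or_ge t 2 with h2 | h2
          · interval_cases t <;> omega
          · exact h2
        have : 2 * 2^(K+1) ≤ 2^(K+1) * t := by nlinarith [Nat.one_le_two_pow (n := K+1)]
        omega
      set m' := m - 2^(K+1-k) with hm'def
      have hKk : k + (K+1-k) = K+1 := by omega
      have hsplit : 2^k * m' = 2^k * m - 2^(K+1) := by
        rw [hm'def, Nat.mul_sub, ← pow_add, hKk]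
      have hm'odd : Odd m' := by
        have heven : Even (2^(K+1-k)) := by
          have hKk' : K + 1 - k = (K - k) + 1 := by omega
          exact ⟨2^(K-k), by rw [hKk', pow_succ]; ring⟩
        rcases hm with ⟨j, hj⟩
        rcases heven with ⟨i, hi⟩
        have : 2^(K+1-k) ≤ m := by
          by_contra hc
          push_neg at hc
          have h1 : 2^k * (m+1) ≤ 2^k * 2^(K+1-k) :=
            Nat.mul_le_mul_left _ hc
          rw [← pow_add, hKk] at h1
          have h2 : 2^k * (m+1) = 2^k * m + 2^k := by ring
          omega
        exact ⟨j - i, by omega⟩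
      have hlt' : 2^k * m' < 2^(K+1) := by
        rw [hsplit]
        have : 2^(K+2) = 2^(K+1) + 2^(K+1) := by rw [pow_succ]; ring
        omega
      have hpos' : 1 ≤ 2^k * m' := by omega
      rw [List.getD_append_right _ _ _ _ (by omega),
        List.getD_append_right _ _ _ _ (by rw [hlenc]; omega)]
      have hidx : 2^k*m - 1 - (sMuW^[K] [ACD.a]).length - (sMuW^[K] [ACD.c]).length
          = 2^k * m' - 1 := by
        rw [hlenc, hsplit]; omega
      rw [hidx]
      exact ih k m' hm'odd hlt'

/-- Let `ξ` be the unique infinite string (indexed from 1) fixed by the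
substitution `a → aca`, `c → d`, `d → c` and beginning with `a`; equivalently,
every iterate `sMu^k(a)` is a prefix of `ξ`.  Writing `n = 2^k * m` with `m`
odd, the `n`-th letter of `ξ` is `a` if `k = 0`, `c` if `k` is odd, and `d` if
`k` is even and positive. -/
theorem xiMu_letter
    (ξ : ℕ → ACD)
    (hprefix : ∀ k n : ℕ, n < (sMuW^[k] [ACD.a]).length →
      (sMuW^[k] [ACD.a]).getD n ACD.a = ξ (n + 1)) :
    ∀ k m : ℕ, Odd m →
      ξ (2 ^ k * m) =
        if k = 0 then ACD.a else if Odd k then ACD.c else ACD.d := by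
  intro k m hm
  set n := 2^k * m with hn
  have hn1 : 1 ≤ n := Nat.le_mul_of_pos_right _ hm.pos |>.trans' Nat.one_le_two_pow
  have hlen := len_a n
  have hlt : n < 2^(n+1) := by
    have : n < 2^n := Nat.lt_two_pow_self
    have : 2^n ≤ 2^(n+1) := Nat.pow_le_pow_right (by norm_num) (by omega)
    omega
  have h1 : n - 1 < (sMuW^[n] [ACD.a]).length := by omega
  have h2 := hprefix n (n-1) h1
  have h3 : n - 1 + 1 = n := by omega
  rw [h3] at h2
  rw [← h2]
  exact key n k m hm hlt
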